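/- Let (φₖ) be a sequence of nonnegative reals, M ≥ 0 an integer, and define mₖ with m₀ = 0 and mₖ ≤ min(mₖ₋₁ + 1, M) for k ≥ 1. Suppose for each k ≥ 1 that φₖ ≤ max_{0 ≤ j ≤ m_{k-1}} φ_{k-1-j}. Then the sequence k ↦ max_{0 ≤ j ≤ mₖ} φ_{k-j} is monotonically nonincreasing. -/

import Mathlib

open Finset

/-- in the Grippo–Lampariello–Lucidi nonmonotone line search, the
windowed maxima `k ↦ max_{0 ≤ j ≤ mₖ} φ_{k-j}` form a nonincreasing sequence. -/
theorem nonmonotone_window_max_antitone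
    (φ : ℕ → ℝ) (hφ : ∀ k, 0 ≤ φ k)
    (M : ℕ) (m : ℕ → ℕ) (hm0 : m 0 = 0)
    (hm : ∀ k, m (k + 1) ≤ min (m k + 1) M)
    (hdec : ∀ k, φ (k + 1) ≤
      (Finset.range (m k + 1)).sup' Finset.nonempty_range_add_one (fun j => φ (k - j))) :
    ∀ k, (Finset.range (m (k + 1) + 1)).sup' Finset.nonempty_range_add_one
        (fun j => φ (k + 1 - j)) ≤
      (Finset.range (m k + 1)).sup' Finset.nonempty_range_add_one (fun j => φ (k - j)) := by
  intro k
  apply Finset.sup'_le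
  intro j hj
  rw [Finset.mem_range] at hj
  cases j with
  | zero => simpa using hdec k
  | succ i =>
    have hi : i < m k + 1 := by
      have := (hm k).trans (min_le_left _ _)
      omega
    have : φ (k + 1 - (i + 1)) = φ (k - i) := by congr 1; omega
    rw [this]
    exact Finset.le_sup' (fun j => φ (k - j)) (Finset.mem_range.mpr hi)
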